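/- Let U be a unital of order n ≥ 2 and let G_U be its incidence graph. Then i(G_U) ≤ 2(n³ + 1 − min{m(U), ⌊c(n)⌋}) / (n²(n² + 1)). -/

import Mathlib

open Finset

/-- A 2-(v,k,λ) design with `b` blocks and `r` blocks through each point:
points form a finset `points` of size `v`, blocks a finset `blocks` of
`k`-element subsets of `points`, every pair of distinct points lying in
exactly `lam` blocks, where `v > k > lam ≥ 1`. -/
structure TwoDesign (α : Type*) [DecidableEq α] where
  v : ℕ
  b : ℕ
  r : ℕ
  k : ℕ
  lam : ℕ
  points : Finset α
  blocks : Finset (Finset α)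
  lam_pos : 0 < lam
  lam_lt_k : lam < k
  k_lt_v : k < v
  card_points : points.card = v
  card_blocks : blocks.card = b
  block_subset : ∀ B ∈ blocks, B ⊆ points
  card_block : ∀ B ∈ blocks, B.card = k
  pair_count : ∀ p ∈ points, ∀ q ∈ points, p ≠ q →
    (blocks.filter fun B => p ∈ B ∧ q ∈ B).card = lam
  point_count : ∀ p ∈ points, (blocks.filter fun B => p ∈ B).card = r

variable {α : Type*} [DecidableEq α]

/-- In the incidence graph, the neighbourhood of a set `X` of points:
the blocks containing at least one point of `X`. -/
def TwoDesign.blockNbhd (D : TwoDesign α) (X : Finset α) : Finset (Finset α) :=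
  D.blocks.filter fun B => ∃ p ∈ X, p ∈ B

/-- In the incidence graph, the neighbourhood of a set `Y` of blocks:
the points lying on at least one block of `Y`. -/
def TwoDesign.pointNbhd (D : TwoDesign α) (Y : Finset (Finset α)) : Finset α :=
  D.points.filter fun p => ∃ B ∈ Y, p ∈ B

/-- A unital of order `n`: a 2-(n³+1, n+1, 1) design; it has
`n⁴ - n³ + n²` blocks and `n²` blocks through each point. -/
def TwoDesign.IsUnital (D : TwoDesign α) (n : ℕ) : Prop :=
  D.v = n ^ 3 + 1 ∧ D.b = n ^ 4 - n ^ 3 + n ^ 2 ∧ D.r = n ^ 2 ∧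
    D.k = n + 1 ∧ D.lam = 1

/-- `c(n) = n² - (√(8n²+9) - 3)/2`. -/
noncomputable def cFun (n : ℕ) : ℝ :=
  (n : ℝ) ^ 2 - (Real.sqrt (8 * (n : ℝ) ^ 2 + 9) - 3) / 2

/-- The vertex-isoperimetric number of the incidence graph of `D`:
a subset `S` of the vertex set `P ∪ 𝓑` is encoded as the pair
`(X, Y) = (S ∩ P, S ∩ 𝓑)`; then `|S| = |X| + |Y|` and
`|N(S)| = |N(Y) \ X| + |N(X) \ Y|`. -/
noncomputable def isoInc (D : TwoDesign α) : ℝ :=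
  sInf { t : ℝ | ∃ X ⊆ D.points, ∃ Y ⊆ D.blocks,
    0 < X.card + Y.card ∧ 2 * (X.card + Y.card) ≤ D.v + D.b ∧
    t = (((D.pointNbhd Y \ X).card + (D.blockNbhd X \ Y).card : ℕ) : ℝ) /
        ((X.card + Y.card : ℕ) : ℝ) }

/-- In the non-incidence graph, the neighbourhood of a set `X` of points:
the blocks missing at least one point of `X`. -/
def TwoDesign.blockNbhdC (D : TwoDesign α) (X : Finset α) : Finset (Finset α) :=
  D.blocks.filter fun B => ∃ p ∈ X, p ∉ B

/-- In the non-incidence graph, the neighbourhood of a set `Y` of blocks: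
the points missed by at least one block of `Y`. -/
def TwoDesign.pointNbhdC (D : TwoDesign α) (Y : Finset (Finset α)) : Finset α :=
  D.points.filter fun p => ∃ B ∈ Y, p ∉ B

/-- The vertex-isoperimetric number of the non-incidence graph of `D`. -/
noncomputable def isoNonInc (D : TwoDesign α) : ℝ :=
  sInf { t : ℝ | ∃ X ⊆ D.points, ∃ Y ⊆ D.blocks,
    0 < X.card + Y.card ∧ 2 * (X.card + Y.card) ≤ D.v + D.b ∧
    t = (((D.pointNbhdC Y \ X).card + (D.blockNbhdC X \ Y).card : ℕ) : ℝ) /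
        ((X.card + Y.card : ℕ) : ℝ) }

/-- An arc of a design: a set of at least 3 points, no three collinear. -/
def TwoDesign.IsArc (D : TwoDesign α) (X : Finset α) : Prop :=
  X ⊆ D.points ∧ 3 ≤ X.card ∧ ∀ B ∈ D.blocks, (B ∩ X).card ≤ 2

/-- `m(U)`: the maximum size of an arc in the design. -/
noncomputable def maxArc (D : TwoDesign α) : ℕ :=
  sSup { k : ℕ | ∃ X : Finset α, D.IsArc X ∧ X.card = k }

set_option maxHeartbeats 1000000 in
theorem iso_inc_upper_bound (n : ℕ) (hn : 2 ≤ n) (D : TwoDesign α) (hU : D.IsUnital n) :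
    isoInc D ≤ 2 * ((n : ℝ) ^ 3 + 1 - min ((maxArc D : ℝ)) ((⌊cFun n⌋ : ℝ))) /
      ((n : ℝ) ^ 2 * ((n : ℝ) ^ 2 + 1)) := by
  
  obtain ⟨hv, hb, hr, hk, hlam⟩ := hU
  have hn1 : 1 ≤ n := by omega
  have hnR : (2:ℝ) ≤ (n:ℝ) := by exact_mod_cast hn
  -- the square root
  set s : ℝ := Real.sqrt (8 * (n:ℝ)^2 + 9) with hs_def
  have hs_nonneg : 0 ≤ s := Real.sqrt_nonneg _
  have hs_sq : s^2 = 8*(n:ℝ)^2+9 := Real.sq_sqrt (by positivity)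
  have hs3 : 3 ≤ s := by
    nlinarith [hs_sq, hs_nonneg]
  have hcle : cFun n ≤ (n:ℝ)^2 := by
    unfold cFun; rw [← hs_def]; linarith
  have hc0 : 0 ≤ cFun n := by
    unfold cFun; rw [← hs_def]
    nlinarith [hs_sq, hs_nonneg]
  set tN : ℕ := (⌊cFun n⌋).toNat with htN_def
  have hfloor_nonneg : (0:ℤ) ≤ ⌊cFun n⌋ := Int.floor_nonneg.2 hc0
  have htN_cast : (tN : ℝ) = ((⌊cFun n⌋ : ℤ) : ℝ) := by
    rw [htN_def]; exact_mod_cast Int.toNat_of_nonneg hfloor_nonneg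
  set m : ℕ := min (maxArc D) tN with hm_def
  have hm_le_c : (m:ℝ) ≤ cFun n := by
    calc (m:ℝ) ≤ (tN:ℝ) := by exact_mod_cast min_le_right _ _
    _ = ((⌊cFun n⌋ : ℤ) : ℝ) := htN_cast
    _ ≤ cFun n := Int.floor_le _
  have hm_le_n2 : m ≤ n^2 := by
    have : (m:ℝ) ≤ ((n^2 : ℕ) : ℝ) := by push_cast; exact hm_le_c.trans hcle
    exact_mod_cast this
  -- obtain the set A of m points, no three collinear
  have hA : ∃ A : Finset α, A ⊆ D.points ∧ A.card = m ∧ ∀ B ∈ D.blocks, (B ∩ A).card ≤ 2 := by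
    by_cases hm3 : 3 ≤ m
    · have hne : {k : ℕ | ∃ X : Finset α, D.IsArc X ∧ X.card = k}.Nonempty := by
        by_contra h
        have h0 : maxArc D = 0 := by
          unfold maxArc
          rw [Set.not_nonempty_iff_eq_empty.1 h]
          exact csSup_empty
        have : m ≤ maxArc D := min_le_left _ _
        omega
      have hbdd : BddAbove {k : ℕ | ∃ X : Finset α, D.IsArc X ∧ X.card = k} := by
        refine ⟨n^3+1, fun k hk => ?_⟩
        obtain ⟨X, hX, rfl⟩ := hk
        calc X.card ≤ D.points.card := Finset.card_le_card hX.1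
        _ = n^3+1 := by rw [D.card_points, hv]
      obtain ⟨X0, hX0, hX0card⟩ := Nat.sSup_mem hne hbdd
      have hmX0 : m ≤ X0.card := by rw [hX0card]; exact min_le_left _ _
      obtain ⟨A, hAX0, hAcard⟩ := Finset.exists_subset_card_eq hmX0
      refine ⟨A, hAX0.trans hX0.1, hAcard, fun B hB =>
        le_trans (Finset.card_le_card ?_) (hX0.2.2 B hB)⟩
      exact Finset.inter_subset_inter Finset.Subset.rfl hAX0
    · have hmP : m ≤ D.points.card := by
        have hn3 : 1 ≤ n^3 := Nat.one_le_pow _ _ (by omega)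
        rw [D.card_points, hv]; omega
      obtain ⟨A, hAP, hAcard⟩ := Finset.exists_subset_card_eq hmP
      refine ⟨A, hAP, hAcard, fun B hB => ?_⟩
      calc (B ∩ A).card ≤ A.card := Finset.card_le_card Finset.inter_subset_right
      _ ≤ 2 := by omega
  obtain ⟨A, hAP, hAcard, hAarc⟩ := hA
  -- double counting 1 : incidences
  have hsum1 : ∑ B ∈ D.blocks, (B ∩ A).card = m * n^2 := by
    have step : ∀ B : Finset α, (B ∩ A).card = ∑ p ∈ A, if p ∈ B then 1 else 0 := by
      intro B
      rw [← Finset.card_filter, Finset.filter_mem_eq_inter, Finset.inter_comm]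
    calc ∑ B ∈ D.blocks, (B ∩ A).card
        = ∑ B ∈ D.blocks, ∑ p ∈ A, if p ∈ B then 1 else 0 := by
          exact Finset.sum_congr rfl fun B _ => step B
      _ = ∑ p ∈ A, ∑ B ∈ D.blocks, if p ∈ B then 1 else 0 := Finset.sum_comm
      _ = ∑ p ∈ A, n^2 := by
          refine Finset.sum_congr rfl fun p hp => ?_
          rw [← Finset.card_filter]
          have := D.point_count p (hAP hp)
          rw [this, hr]
      _ = m * n^2 := by rw [Finset.sum_const, hAcard, smul_eq_mul]
  -- double counting 2 : pairs
  have hsum2 : ∑ B ∈ D.blocks, (B ∩ A).offDiag.card = m * m - m := by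
    have step : ∀ B : Finset α,
        (B ∩ A).offDiag = A.offDiag.filter (fun z => z.1 ∈ B ∧ z.2 ∈ B) := by
      intro B
      ext ⟨p, q⟩
      simp only [Finset.mem_offDiag, Finset.mem_filter, Finset.mem_inter]
      tauto
    calc ∑ B ∈ D.blocks, (B ∩ A).offDiag.card
        = ∑ B ∈ D.blocks, ∑ z ∈ A.offDiag, if z.1 ∈ B ∧ z.2 ∈ B then 1 else 0 := by
          refine Finset.sum_congr rfl fun B _ => ?_
          rw [step B, Finset.card_filter]
      _ = ∑ z ∈ A.offDiag, ∑ B ∈ D.blocks, if z.1 ∈ B ∧ z.2 ∈ B then 1 else 0 :=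
          Finset.sum_comm
      _ = ∑ z ∈ A.offDiag, 1 := by
          refine Finset.sum_congr rfl fun z hz => ?_
          rw [← Finset.card_filter]
          rw [Finset.mem_offDiag] at hz
          have := D.pair_count z.1 (hAP hz.1) z.2 (hAP hz.2.1) hz.2.2
          rw [this, hlam]
      _ = m * m - m := by
          rw [Finset.sum_const, smul_eq_mul, mul_one, Finset.offDiag_card, hAcard]
  -- the set of blocks meeting A
  set Y0 : Finset (Finset α) := D.blockNbhd A with hY0_def
  have hY0sub : Y0 ⊆ D.blocks := Finset.filter_subset _ _
  -- pointwise inequality and summation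
  have hcount : 2 * Y0.card + (m * m - m) ≤ 2 * (m * n^2) := by
    have hY0card : Y0.card = ∑ B ∈ D.blocks, if (∃ p ∈ A, p ∈ B) then 1 else 0 := by
      rw [hY0_def]; exact Finset.card_filter _ _
    have key : ∀ B ∈ D.blocks,
        2 * (if (∃ p ∈ A, p ∈ B) then 1 else 0) + (B ∩ A).offDiag.card
          ≤ 2 * (B ∩ A).card := by
      intro B hB
      have hc2 : (B ∩ A).card ≤ 2 := hAarc B hB
      rw [Finset.offDiag_card]
      split_ifs with h
      · obtain ⟨p, hpA, hpB⟩ := h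
        have hc1 : 1 ≤ (B ∩ A).card := Finset.card_pos.2 ⟨p, Finset.mem_inter.2 ⟨hpB, hpA⟩⟩
        interval_cases h : (B ∩ A).card <;> omega
      · interval_cases h2 : (B ∩ A).card <;> omega
    calc 2 * Y0.card + (m * m - m)
        = ∑ B ∈ D.blocks,
            (2 * (if (∃ p ∈ A, p ∈ B) then 1 else 0) + (B ∩ A).offDiag.card) := by
          rw [Finset.sum_add_distrib, ← Finset.mul_sum, ← hY0card, hsum2]
      _ ≤ ∑ B ∈ D.blocks, 2 * (B ∩ A).card := Finset.sum_le_sum key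
      _ = 2 * (m * n^2) := by rw [← Finset.mul_sum, hsum1]
  have hmm : m ≤ m * m := by
    rcases Nat.eq_zero_or_pos m with h | h
    · simp [h]
    · exact Nat.le_mul_of_pos_left m h
  -- key inequality from m ≤ c(n)
  have hq : m * 2 * n^2 + 3 * m ≤ n^4 + n^2 + m * m := by
    have hqR : (m:ℝ) * 2 * (n:ℝ)^2 + 3 * m ≤ (n:ℝ)^4 + (n:ℝ)^2 + (m:ℝ) * m := by
      have h1 : s ≤ 2*(n:ℝ)^2 + 3 - 2*(m:ℝ) := by
        have := hm_le_c
        unfold cFun at this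
        rw [← hs_def] at this
        linarith
      have h2 : s * s ≤ (2*(n:ℝ)^2 + 3 - 2*(m:ℝ)) * (2*(n:ℝ)^2 + 3 - 2*(m:ℝ)) :=
        mul_self_le_mul_self hs_nonneg h1
      nlinarith [hs_sq]
    have : ((m * 2 * n^2 + 3 * m : ℕ) : ℝ) ≤ ((n^4 + n^2 + m * m : ℕ) : ℝ) := by
      push_cast; linarith
    exact_mod_cast this
  -- K = (n^4+n^2)/2
  have heven : ∃ K : ℕ, 2 * K = n^4 + n^2 := by
    obtain ⟨c, hc⟩ := Nat.even_mul_succ_self (n^2)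
    refine ⟨c, ?_⟩
    have : n^2 * (n^2 + 1) = n^4 + n^2 := by ring
    omega
  obtain ⟨K, hK⟩ := heven
  have hKpos : 0 < K := by
    have h2 : 0 < n^4 + n^2 := by positivity
    omega
  have h34 : 2 * n^3 ≤ n^4 := by
    calc 2 * n^3 ≤ n * n^3 := Nat.mul_le_mul_right _ hn
    _ = n^4 := by ring
  have h34' : n^3 ≤ n^4 := by omega
  have h23 : n^2 ≤ n^3 := Nat.pow_le_pow_right hn1 (by omega)
  -- m + |Y0| ≤ K
  have hmY0K : m + Y0.card ≤ K := by
    have hc' : (2 * Y0.card : ℤ) + ((m:ℤ) * m - m) ≤ 2 * (m * n^2) := by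
      have := hcount
      zify [hmm] at this
      exact_mod_cast this
    have hq' : (m:ℤ) * 2 * n^2 + 3 * m ≤ (n:ℤ)^4 + n^2 + m * m := by exact_mod_cast hq
    have hK' : 2 * (K:ℤ) = (n:ℤ)^4 + n^2 := by exact_mod_cast hK
    have : (m:ℤ) + Y0.card ≤ K := by linarith
    exact_mod_cast this
  have hm_le_K : m ≤ K := by omega
  have hKb : K ≤ D.blocks.card := by
    rw [D.card_blocks, hb]
    zify [h34']
    have hK' : 2 * (K:ℤ) = (n:ℤ)^4 + n^2 := by exact_mod_cast hK
    have h34'' : 2 * (n:ℤ)^3 ≤ (n:ℤ)^4 := by exact_mod_cast h34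
    linarith
  -- pad Y0 to a set Y of size K - m
  have hY0le : Y0.card ≤ K - m := by omega
  have hKmb : K - m ≤ D.blocks.card := le_trans (Nat.sub_le _ _) hKb
  obtain ⟨Y, hY0Y, hYb, hYcard⟩ := Finset.exists_subsuperset_card_eq hY0sub hY0le hKmb
  have hcards : A.card + Y.card = K := by
    rw [hAcard, hYcard]; omega
  -- the element of the infimum set
  have hbddS : BddBelow { t : ℝ | ∃ X ⊆ D.points, ∃ Y ⊆ D.blocks,
      0 < X.card + Y.card ∧ 2 * (X.card + Y.card) ≤ D.v + D.b ∧
      t = (((D.pointNbhd Y \ X).card + (D.blockNbhd X \ Y).card : ℕ) : ℝ) /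
          ((X.card + Y.card : ℕ) : ℝ) } := by
    refine ⟨0, ?_⟩
    rintro t ⟨X, hX, Y', hY', h1, h2, rfl⟩
    exact div_nonneg (Nat.cast_nonneg _) (Nat.cast_nonneg _)
  have hmem : (((D.pointNbhd Y \ A).card + (D.blockNbhd A \ Y).card : ℕ) : ℝ) /
      ((A.card + Y.card : ℕ) : ℝ) ∈ { t : ℝ | ∃ X ⊆ D.points, ∃ Y ⊆ D.blocks,
      0 < X.card + Y.card ∧ 2 * (X.card + Y.card) ≤ D.v + D.b ∧
      t = (((D.pointNbhd Y \ X).card + (D.blockNbhd X \ Y).card : ℕ) : ℝ) /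
          ((X.card + Y.card : ℕ) : ℝ) } := by
    refine ⟨A, hAP, Y, hYb, ?_, ?_, rfl⟩
    · omega
    · rw [hv, hb, hcards]
      zify [h34']
      have hK' : 2 * (K:ℤ) = (n:ℤ)^4 + n^2 := by exact_mod_cast hK
      linarith
  refine le_trans (csInf_le hbddS hmem) ?_
  -- now bound the ratio
  have hBempty : D.blockNbhd A \ Y = ∅ := Finset.sdiff_eq_empty_iff_subset.2 hY0Y
  have hnum : (D.pointNbhd Y \ A).card + (D.blockNbhd A \ Y).card ≤ n^3 + 1 - m := by
    rw [hBempty, Finset.card_empty, add_zero]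
    calc (D.pointNbhd Y \ A).card ≤ (D.points \ A).card := by
          refine Finset.card_le_card (Finset.sdiff_subset_sdiff ?_ le_rfl)
          exact Finset.filter_subset _ _
    _ = D.points.card - A.card := Finset.card_sdiff_of_subset hAP
    _ = n^3 + 1 - m := by rw [D.card_points, hv, hAcard]
  have hm_le_v : m ≤ n^3 + 1 := by omega
  have hnumR : (((D.pointNbhd Y \ A).card + (D.blockNbhd A \ Y).card : ℕ) : ℝ)
      ≤ (n:ℝ)^3 + 1 - m := by
    have := hnum
    have h2 : ((((D.pointNbhd Y \ A).card + (D.blockNbhd A \ Y).card : ℕ)) : ℝ)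
        ≤ ((n^3 + 1 - m : ℕ) : ℝ) := by exact_mod_cast this
    rw [Nat.cast_sub hm_le_v] at h2
    push_cast at h2
    push_cast
    linarith

  have hminm : min ((maxArc D : ℝ)) ((⌊cFun n⌋ : ℝ)) = (m : ℝ) := by
    rw [← htN_cast, hm_def]
    push_cast
    rfl
  rw [hminm, hcards]
  have hKR : 2 * (K:ℝ) = (n:ℝ)^2 * ((n:ℝ)^2 + 1) := by
    have h : ((2 * K : ℕ) : ℝ) = ((n^4 + n^2 : ℕ) : ℝ) := by exact_mod_cast hK
    push_cast at h
    linear_combination h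
  have hKposR : (0:ℝ) < (K:ℕ) := by exact_mod_cast hKpos
  have hdenpos : (0:ℝ) < (n:ℝ)^2 * ((n:ℝ)^2 + 1) := by positivity
  rw [div_le_div_iff₀ hKposR hdenpos]
  calc (((D.pointNbhd Y \ A).card + (D.blockNbhd A \ Y).card : ℕ) : ℝ)
        * ((n:ℝ)^2 * ((n:ℝ)^2 + 1))
      ≤ ((n:ℝ)^3 + 1 - m) * (2 * (K:ℝ)) := by
        rw [← hKR]
        have hge : (0:ℝ) ≤ 2 * (K:ℝ) := by positivity
        exact mul_le_mul_of_nonneg_right hnumR hge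
    _ = 2 * ((n:ℝ)^3 + 1 - m) * K := by ring
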